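/- Let A be a parity check matrix of the Hamming code of length n_a = (q^{u m_a}−1)/(q^u−1) over F_{q^u}, and B a parity check matrix of the Hamming code of length n_b = (q^{m_b}−1)/(q−1) over F_q. Then the code over F_{q^u} with parity check matrix A ⊗ B has covering radius min{u m_a, m_b}. -/

import Mathlib

open Matrix Kronecker

/-- H is a parity check matrix of a Hamming code: its columns are nonzero, pairwise
non-proportional, and represent all 1-dimensional subspaces of F^m. -/
def IsHammingPCM {F : Type*} [Field F] {m n : ℕ} (H : Matrix (Fin m) (Fin n) F) : Prop :=
  (∀ j, (fun i => H i j) ≠ (0 : Fin m → F)) ∧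
  (∀ j j' : Fin n, j ≠ j' → ∀ c : F, (fun i => H i j) ≠ c • (fun i => H i j')) ∧
  (∀ x : Fin m → F, x ≠ 0 → ∃ (j : Fin n) (c : F), x = c • (fun i => H i j))

section Aux

variable {K L : Type} [Field K] [Fintype K] [DecidableEq K]
  [Field L] [Fintype L] [DecidableEq L] [Algebra K L]
variable {ma na mb nb : ℕ}

private lemma hN_add {ι : Type*} [Fintype ι] (a c : ι → L) :
    hammingNorm (a + c) ≤ hammingNorm a + hammingNorm c := by
  have h1 := hammingDist_triangle (a + c) c 0
  rw [hammingDist_zero_right, hammingDist_zero_right, hammingDist_comm (a + c) c, hammingDist_eq_hammingNorm, neg_add_eq_sub, add_sub_cancel_right] at h1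
  simpa using h1

private lemma hN_single {ι : Type*} [Fintype ι] [DecidableEq ι] (p : ι) (t : L) :
    hammingNorm (Pi.single p t : ι → L) ≤ 1 := by
  classical
  have hsub : (Finset.univ.filter fun i => (Pi.single p t : ι → L) i ≠ 0) ⊆ {p} := by
    intro i hi
    simp only [Finset.mem_filter, Finset.mem_univ, true_and] at hi
    simp only [Finset.mem_singleton]
    by_contra h
    exact hi (by simp [Pi.single_eq_of_ne h])
  calc hammingNorm (Pi.single p t : ι → L)
      = (Finset.univ.filter fun i => (Pi.single p t : ι → L) i ≠ 0).card := rfl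
    _ ≤ ({p} : Finset ι).card := Finset.card_le_card hsub
    _ = 1 := Finset.card_singleton p

private lemma hN_sum {ι κ : Type*} [Fintype ι] (s : Finset κ) (f : κ → ι → L)
    (hf : ∀ k, hammingNorm (f k) ≤ 1) : hammingNorm (∑ k ∈ s, f k) ≤ s.card := by
  classical
  induction s using Finset.cons_induction with
  | empty => simp
  | cons k s hk ih =>
    rw [Finset.sum_cons, Finset.card_cons]
    exact le_trans (hN_add _ _) (by have := hf k; omega)

private lemma mulVec_finsum {R : Type*} [CommRing R] {m n : Type*} [Fintype m] [Fintype n]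
    {κ : Type*} (M : Matrix m n R) (s : Finset κ) (g : κ → (n → R)) :
    M.mulVec (∑ k ∈ s, g k) = ∑ k ∈ s, M.mulVec (g k) := by
  have := map_sum M.mulVecLin g s
  simpa only [mulVecLin_apply] using this

/-- Construction of a preimage of any syndrome with weight at most `mb`. -/
private lemma exists_preimage_le_mb (hma : 0 < ma)
    (A : Matrix (Fin ma) (Fin na) L) (hA : IsHammingPCM A)
    (B : Matrix (Fin mb) (Fin nb) K) (hB : IsHammingPCM B)
    (S : Fin ma × Fin mb → L) :
    ∃ e : Fin na × Fin nb → L,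
      (A ⊗ₖ B.map (algebraMap K L)).mulVec e = S ∧ hammingNorm e ≤ mb := by
  classical
  obtain ⟨j₀, -, -⟩ := hA.2.2 (Pi.single ⟨0, hma⟩ 1) (by
    intro h
    have := congrFun h ⟨0, hma⟩
    simp at this)
  have hcol : ∀ k : Fin mb, ∃ j c, ∀ i, S (i, k) = c * A i j := by
    intro k
    by_cases h : (fun i => S (i, k)) = 0
    · exact ⟨j₀, 0, fun i => by simpa using congrFun h i⟩
    · obtain ⟨j, c, hc⟩ := hA.2.2 _ h
      exact ⟨j, c, fun i => by simpa using congrFun hc i⟩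
  choose j c hc using hcol
  have hek : ∀ k : Fin mb, ∃ l d, ∀ k', (Pi.single k 1 : Fin mb → K) k' = d * B k' l := by
    intro k
    obtain ⟨l, d, hd⟩ := hB.2.2 (Pi.single k 1) (by
      intro h; have := congrFun h k; simp at this)
    exact ⟨l, d, fun k' => by simpa using congrFun hd k'⟩
  choose l d hd using hek
  set M := A ⊗ₖ B.map (algebraMap K L) with hM
  refine ⟨∑ k : Fin mb, Pi.single (j k, l k) (c k * algebraMap K L (d k)), ?_, ?_⟩
  · rw [mulVec_finsum]
    funext ik
    obtain ⟨i, k'⟩ := ik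
    rw [Finset.sum_apply]
    have key : ∀ k : Fin mb,
        M.mulVec (Pi.single (j k, l k) (c k * algebraMap K L (d k))) (i, k')
          = if k' = k then S (i, k) else 0 := by
      intro k
      simp only [hM, Matrix.mulVec_single, kroneckerMap_apply, Matrix.map_apply]
      have h1 : (algebraMap K L) (B k' (l k)) * (algebraMap K L) (d k)
          = algebraMap K L ((Pi.single k 1 : Fin mb → K) k') := by
        rw [← _root_.map_mul, mul_comm]
        exact congrArg _ (hd k k').symm
      calc A i (j k) * algebraMap K L (B k' (l k)) * (c k * algebraMap K L (d k))
          = c k * A i (j k)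
              * ((algebraMap K L) (B k' (l k)) * (algebraMap K L) (d k)) := by ring
        _ = c k * A i (j k) * algebraMap K L ((Pi.single k 1 : Fin mb → K) k') := by rw [h1]
        _ = if k' = k then S (i, k) else 0 := by
            rcases eq_or_ne k' k with h | h
            · rw [h, Pi.single_eq_same, _root_.map_one, mul_one, if_pos rfl]
              exact (hc k i).symm
            · simp [Pi.single_eq_of_ne h, if_neg h]
    rw [Finset.sum_congr rfl (fun k _ => key k)]
    simp
  · exact le_trans (hN_sum Finset.univ _ (fun k => hN_single _ _)) (by simp)

/-- Construction of a preimage of any syndrome with weight at most `u * ma`. -/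
private lemma exists_preimage_le_uma {u : ℕ} (b : Module.Basis (Fin u) K L) (hmb : 0 < mb)
    (A : Matrix (Fin ma) (Fin na) L) (hA : IsHammingPCM A)
    (B : Matrix (Fin mb) (Fin nb) K) (hB : IsHammingPCM B)
    (S : Fin ma × Fin mb → L) :
    ∃ e : Fin na × Fin nb → L,
      (A ⊗ₖ B.map (algebraMap K L)).mulVec e = S ∧ hammingNorm e ≤ u * ma := by
  classical
  obtain ⟨l₀, -, -⟩ := hB.2.2 (Pi.single ⟨0, hmb⟩ 1) (by
    intro h
    have := congrFun h ⟨0, hmb⟩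
    simp at this)
  have hrow : ∀ p : Fin ma × Fin u, ∃ ll dd, ∀ k : Fin mb,
      (b.repr (S (p.1, k)) p.2 : K) = dd * B k ll := by
    intro p
    by_cases h : (fun k : Fin mb => (b.repr (S (p.1, k)) p.2 : K)) = 0
    · exact ⟨l₀, 0, fun k => by simpa using congrFun h k⟩
    · obtain ⟨ll, dd, hdd⟩ := hB.2.2 _ h
      exact ⟨ll, dd, fun k => by simpa using congrFun hdd k⟩
  choose l dd hdd using hrow
  have hej : ∀ jj : Fin ma, ∃ j' cc, ∀ i, (Pi.single jj 1 : Fin ma → L) i = cc * A i j' := by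
    intro jj
    obtain ⟨j', cc, hcc⟩ := hA.2.2 (Pi.single jj 1) (by
      intro h; have := congrFun h jj; simp at this)
    exact ⟨j', cc, fun i => by simpa using congrFun hcc i⟩
  choose j' cc hcc using hej
  set M := A ⊗ₖ B.map (algebraMap K L) with hM
  refine ⟨∑ p : Fin ma × Fin u,
      Pi.single (j' p.1, l p) (b p.2 * cc p.1 * algebraMap K L (dd p)), ?_, ?_⟩
  · rw [mulVec_finsum]
    funext ik
    obtain ⟨i, k⟩ := ik
    rw [Finset.sum_apply]
    have key : ∀ p : Fin ma × Fin u,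
        M.mulVec (Pi.single (j' p.1, l p) (b p.2 * cc p.1 * algebraMap K L (dd p))) (i, k)
          = if i = p.1 then (b.repr (S (i, k)) p.2 : K) • b p.2 else 0 := by
      intro p
      simp only [hM, Matrix.mulVec_single, kroneckerMap_apply, Matrix.map_apply]
      have h1 : algebraMap K L (B k (l p)) * algebraMap K L (dd p)
          = algebraMap K L (b.repr (S (p.1, k)) p.2) := by
        rw [← _root_.map_mul, mul_comm]
        exact congrArg _ (hdd p k).symm
      calc A i (j' p.1) * algebraMap K L (B k (l p)) * (b p.2 * cc p.1 * algebraMap K L (dd p))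
          = cc p.1 * A i (j' p.1) * b p.2
              * (algebraMap K L (B k (l p)) * algebraMap K L (dd p)) := by ring
        _ = (Pi.single p.1 1 : Fin ma → L) i * b p.2
              * algebraMap K L (b.repr (S (p.1, k)) p.2) := by rw [h1, ← hcc p.1 i]
        _ = if i = p.1 then (b.repr (S (i, k)) p.2 : K) • b p.2 else 0 := by
            rcases eq_or_ne i p.1 with h | h
            · rw [← h]
              simp [Pi.single_eq_same, Algebra.smul_def]
              ring
            · simp [Pi.single_eq_of_ne h, if_neg h]
    rw [Finset.sum_congr rfl (fun p _ => key p)]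
    rw [Fintype.sum_prod_type]
    have hswap : ∀ jj : Fin ma,
        (∑ t : Fin u, if i = jj then (b.repr (S (i, k)) t : K) • b t else 0)
          = if i = jj then ∑ t : Fin u, (b.repr (S (i, k)) t : K) • b t else 0 := by
      intro jj
      split <;> simp
    rw [Finset.sum_congr rfl (fun jj _ => hswap jj)]
    simp [Module.Basis.sum_repr]
  · refine le_trans (hN_sum Finset.univ _ (fun p => hN_single _ _)) ?_
    simp [mul_comm]

/-- The rank lower bound: there is a syndrome all of whose preimages have weight ≥ r. -/
private lemma lower_bound {u : ℕ} (b : Module.Basis (Fin u) K L) {r : ℕ}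
    (hr1 : r ≤ ma * u) (hr2 : r ≤ mb)
    (A : Matrix (Fin ma) (Fin na) L)
    (B : Matrix (Fin mb) (Fin nb) K) :
    ∃ S : Fin ma × Fin mb → L, ∀ y : Fin na × Fin nb → L,
      (A ⊗ₖ B.map (algebraMap K L)).mulVec y = S → r ≤ hammingNorm y := by
  classical
  set ψ : Fin r → Fin ma × Fin u := fun k => finProdFinEquiv.symm (Fin.castLE hr1 k) with hψ
  have hψinj : Function.Injective ψ :=
    finProdFinEquiv.symm.injective.comp (Fin.castLE_injective hr1)
  set S : Fin ma × Fin mb → L := fun jk =>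
    if h : (jk.2 : ℕ) < r then (Pi.single (ψ ⟨jk.2, h⟩).1 (b (ψ ⟨jk.2, h⟩).2) : Fin ma → L) jk.1 else 0 with hS
  refine ⟨S, ?_⟩
  intro y hy
  set T : Finset (Fin na × Fin nb) := Finset.univ.filter (fun p => y p ≠ 0) with hT
  have hnorm : hammingNorm y = T.card := rfl
  set w : Fin na × Fin nb → (Fin ma → L) := fun p i => y p * A i p.1 with hw
  set W : Submodule K (Fin ma → L) :=
    Submodule.span K ((T.image w : Finset (Fin ma → L)) : Set (Fin ma → L)) with hW
  have hv : ∀ k : Fin r,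
      (fun i => S (i, Fin.castLE hr2 k)) = Pi.single (ψ k).1 (b (ψ k).2) := by
    intro k
    funext i
    have hk : ((Fin.castLE hr2 k : Fin mb) : ℕ) < r := by simpa using k.2
    have hkk : (⟨((Fin.castLE hr2 k : Fin mb) : ℕ), hk⟩ : Fin r) = k := Fin.ext (by simp)
    simp only [hS]
    rw [dif_pos hk, hkk]
  have hmem : ∀ k : Fin r, (Pi.single (ψ k).1 (b (ψ k).2) : Fin ma → L) ∈ W := by
    intro k
    have hcol : (fun i => S (i, Fin.castLE hr2 k))
        = ∑ p ∈ T, B (Fin.castLE hr2 k) p.2 • w p := by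
      funext i
      have h1 : S (i, Fin.castLE hr2 k)
          = ∑ p : Fin na × Fin nb, (B (Fin.castLE hr2 k) p.2 • w p) i := by
        rw [← hy]
        simp only [Matrix.mulVec, dotProduct, kroneckerMap_apply, Matrix.map_apply]
        refine Finset.sum_congr rfl fun p _ => ?_
        simp only [hw, Pi.smul_apply, Algebra.smul_def]
        ring
      rw [h1, Finset.sum_apply]
      exact (Finset.sum_subset (Finset.subset_univ T) (fun p _ hp => by
        have hyp : y p = 0 := by simpa [hT] using hp
        simp [hw, hyp])).symm
    rw [hv k] at hcol
    rw [hcol]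
    exact Submodule.sum_mem _ fun p hp => Submodule.smul_mem _ _
      (Submodule.subset_span (Finset.mem_coe.mpr (Finset.mem_image_of_mem w hp)))
  haveI : Module.Finite K L := Module.Finite.of_finite
  have hli : LinearIndependent K
      (fun k : Fin r => (Pi.single (ψ k).1 (b (ψ k).2) : Fin ma → L)) := by
    have hbasis := (Pi.basis (fun _ : Fin ma => b)).linearIndependent
    have hcomp := hbasis.comp
      (fun k : Fin r => (⟨(ψ k).1, (ψ k).2⟩ : Σ _ : Fin ma, Fin u))
      (fun a c h => by
        have h1 : (ψ a).1 = (ψ c).1 := congrArg Sigma.fst h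
        have h2 : (ψ a).2 = (ψ c).2 := eq_of_heq (Sigma.mk.inj_iff.mp h).2
        exact hψinj (Prod.ext h1 h2))
    have heq : (fun k : Fin r => (Pi.single (ψ k).1 (b (ψ k).2) : Fin ma → L))
        = (⇑(Pi.basis fun _ : Fin ma => b) ∘ fun k : Fin r =>
            (⟨(ψ k).1, (ψ k).2⟩ : Σ _ : Fin ma, Fin u)) := by
      funext k
      simp [Function.comp, Pi.basis_apply]
    rw [heq]
    exact hcomp
  have hli' : LinearIndependent K
      (fun k : Fin r => (⟨Pi.single (ψ k).1 (b (ψ k).2), hmem k⟩ : W)) := by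
    apply LinearIndependent.of_comp W.subtype
    exact hli
  have h1 : r ≤ Module.finrank K W := by
    simpa using hli'.fintype_card_le_finrank
  have h2 : Module.finrank K W ≤ (T.image w).card := finrank_span_finset_le_card _
  have h3 : (T.image w).card ≤ T.card := Finset.card_image_le
  omega

end Aux

/-- The code over F_{q^u} with parity check matrix A ⊗ B, where A is a
Hamming PCM over F_{q^u} and B a Hamming PCM over F_q, has covering radius
min{u·m_a, m_b}. -/
theorem kronecker_hamming_covering_radius
    {q u ma na mb nb : ℕ} (K L : Type) [Field K] [Fintype K] [DecidableEq K]
    [Field L] [Fintype L] [DecidableEq L] [Algebra K L]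
    (hq : Fintype.card K = q) (hL : Fintype.card L = q ^ u)
    (hu : 1 ≤ u) (hma : 2 ≤ ma) (hmb : 2 ≤ mb)
    (A : Matrix (Fin ma) (Fin na) L) (hA : IsHammingPCM A)
    (B : Matrix (Fin mb) (Fin nb) K) (hB : IsHammingPCM B) :
    (∀ x : Fin na × Fin nb → L, ∃ c : Fin na × Fin nb → L,
        (A ⊗ₖ B.map (algebraMap K L)).mulVec c = 0 ∧
          hammingDist x c ≤ min (u * ma) mb) ∧
      (∃ x : Fin na × Fin nb → L, ∀ c : Fin na × Fin nb → L,
        (A ⊗ₖ B.map (algebraMap K L)).mulVec c = 0 →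
          min (u * ma) mb ≤ hammingDist x c) := by
  classical
  have hq2 : 2 ≤ q := by
    rw [← hq]
    exact Fintype.one_lt_card
  haveI : Module.Finite K L := Module.Finite.of_finite
  have hfr : Module.finrank K L = u := by
    have h1 : Fintype.card L = Fintype.card K ^ Module.finrank K L := Module.card_eq_pow_finrank
    rw [hL, hq] at h1
    exact Nat.pow_right_injective hq2 h1.symm
  let b : Module.Basis (Fin u) K L := (Module.finBasis K L).reindex (finCongr hfr)
  constructor
  · intro x
    rcases le_total (u * ma) mb with h | h
    · obtain ⟨e, he, hne⟩ := exists_preimage_le_uma b (by omega : 0 < mb) A hA B hB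
        ((A ⊗ₖ B.map (algebraMap K L)).mulVec x)
      refine ⟨x - e, ?_, ?_⟩
      · rw [Matrix.mulVec_sub, he, sub_self]
      · rw [hammingDist_comm, hammingDist_eq_hammingNorm, neg_add_eq_sub, sub_sub_cancel, min_eq_left h]
        exact hne
    · obtain ⟨e, he, hne⟩ := exists_preimage_le_mb (by omega : 0 < ma) A hA B hB
        ((A ⊗ₖ B.map (algebraMap K L)).mulVec x)
      refine ⟨x - e, ?_, ?_⟩
      · rw [Matrix.mulVec_sub, he, sub_self]
      · rw [hammingDist_comm, hammingDist_eq_hammingNorm, neg_add_eq_sub, sub_sub_cancel, min_eq_right h]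
        exact hne
  · obtain ⟨S, hS⟩ := lower_bound b
      (by rw [Nat.mul_comm ma u]; exact min_le_left _ _) (min_le_right _ _) A B
    obtain ⟨x, hx, -⟩ := exists_preimage_le_mb (by omega : 0 < ma) A hA B hB S
    refine ⟨x, fun c hc => ?_⟩
    have hxc : (A ⊗ₖ B.map (algebraMap K L)).mulVec (x - c) = S := by
      rw [Matrix.mulVec_sub, hx, hc, sub_zero]
    rw [hammingDist_comm, hammingDist_eq_hammingNorm, neg_add_eq_sub]
    exact hS _ hxc
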